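/- arXiv:1312.1910 — 2 statements merged into one kernel-verified Lean document; each statement's English description precedes it below -/
import Mathlib

section
/- Let n1 < n2 < n3 be integers and let f(x) = a + bx + cx² be a quadratic polynomial with complex coefficients. Then ∑_{n=n1}^{n3-1} f(n) = w1·f(n1) + w2·f(n2) + w3·f(n3), where w1 = (n3-n1+1)(3n2-2n1-n3+1)/(6(n2-n1)), w2 = (n3-n1)((n3-n1)²-1)/(6(n2-n1)(n3-n2)), and w3 = (n3-n1-1)(n1-3n2+2n3-1)/(6(n3-n2)). -/
set_option maxHeartbeats 1000000

lemma s_range (g : ℤ → ℂ) (m : ℤ) (k : ℕ) :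
    ∑ n ∈ Finset.Ico m (m + k), g n = ∑ i ∈ Finset.range k, g (m + i) := by
  induction k with
  | zero => simp
  | succ k ih =>
    have hs : Finset.Ico m (m + (k+1:ℕ)) = insert (m+k) (Finset.Ico m (m+k)) := by
      ext x; simp; omega
    rw [hs, Finset.sum_insert (by simp), Finset.sum_range_succ, ← ih]
    push_cast
    ring

lemma s1 (N : ℕ) : ∑ k ∈ Finset.range N, (k:ℂ) = N*(N-1)/2 := by
  induction N with
  | zero => simp
  | succ n ih => rw [Finset.sum_range_succ, ih]; push_cast; ring

lemma s2 (N : ℕ) : ∑ k ∈ Finset.range N, (k:ℂ)^2 = N*(N-1)*(2*N-1)/6 := by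
  induction N with
  | zero => simp
  | succ n ih => rw [Finset.sum_range_succ, ih]; push_cast; ring

theorem stmt_7 (n1 n2 n3 : ℤ) (h12 : n1 < n2) (h23 : n2 < n3)
    (a b c : ℂ) (f : ℤ → ℂ) (hf : ∀ n : ℤ, f n = a + b * n + c * (n : ℂ) ^ 2)
    (w1 w2 w3 : ℂ)
    (hw1 : w1 = ((n3 : ℂ) - n1 + 1) * (3 * (n2 : ℂ) - 2 * n1 - n3 + 1) /
        (6 * ((n2 : ℂ) - n1)))
    (hw2 : w2 = ((n3 : ℂ) - n1) * (((n3 : ℂ) - n1) ^ 2 - 1) /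
        (6 * ((n2 : ℂ) - n1) * ((n3 : ℂ) - n2)))
    (hw3 : w3 = ((n3 : ℂ) - n1 - 1) * ((n1 : ℂ) - 3 * n2 + 2 * n3 - 1) /
        (6 * ((n3 : ℂ) - n2))) :
    ∑ n ∈ Finset.Ico n1 n3, f n = w1 * f n1 + w2 * f n2 + w3 * f n3 := by
  have h21 : ((n2 : ℂ) - n1) ≠ 0 := sub_ne_zero.mpr (by exact_mod_cast h12.ne')
  have h32 : ((n3 : ℂ) - n2) ≠ 0 := sub_ne_zero.mpr (by exact_mod_cast h23.ne')
  set N := (n3 - n1).toNat with hNdef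
  have hN : n1 + (N : ℤ) = n3 := by omega
  have hNc : (N : ℂ) = (n3 : ℂ) - n1 := by
    have h' := congrArg (fun x : ℤ => (x : ℂ)) hN
    push_cast at h'
    linear_combination h'
  have key : ∑ n ∈ Finset.Ico n1 n3, f n = ∑ i ∈ Finset.range N, f (n1 + i) := by
    rw [← hN]; exact s_range f n1 N
  have expand : ∀ i : ℕ,
      f (n1 + (i : ℤ)) = (a + b * n1 + c * (n1 : ℂ) ^ 2) + (b + 2 * c * n1) * i + c * (i : ℂ) ^ 2 := by
    intro i; rw [hf]; push_cast; ring
  rw [key]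
  simp only [expand]
  rw [Finset.sum_add_distrib, Finset.sum_add_distrib, Finset.sum_const, ← Finset.mul_sum,
    ← Finset.mul_sum, s1, s2, Finset.card_range, nsmul_eq_mul]
  have h6 : (6:ℂ) ≠ 0 := by norm_num
  have hD1 : (6:ℂ) * ((n2:ℂ) - n1) ≠ 0 := mul_ne_zero h6 h21
  have hD2 : (6:ℂ) * ((n2:ℂ) - n1) * ((n3:ℂ) - n2) ≠ 0 := mul_ne_zero hD1 h32
  have hD3 : (6:ℂ) * ((n3:ℂ) - n2) ≠ 0 := mul_ne_zero h6 h32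
  have hA : w1 * f n1 =
      (((n3:ℂ) - n1 + 1) * (3 * (n2:ℂ) - 2 * n1 - n3 + 1) * f n1) / (6 * ((n2:ℂ) - n1)) := by
    rw [hw1]; ring
  have hB : w2 * f n2 =
      (((n3:ℂ) - n1) * (((n3:ℂ) - n1) ^ 2 - 1) * f n2) / (6 * ((n2:ℂ) - n1) * ((n3:ℂ) - n2)) := by
    rw [hw2]; ring
  have hC : w3 * f n3 =
      (((n3:ℂ) - n1 - 1) * ((n1:ℂ) - 3 * n2 + 2 * n3 - 1) * f n3) / (6 * ((n3:ℂ) - n2)) := by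
    rw [hw3]; ring
  rw [hA, hB, hC, div_add_div _ _ hD1 hD2, div_add_div _ _ (mul_ne_zero hD1 hD2) hD3,
    eq_div_iff (mul_ne_zero (mul_ne_zero hD1 hD2) hD3), hf n1, hf n2, hf n3, hNc]
  ring
end

section
/- For a > 0 and 0 < x < 2, the series 1/a + (2/a)∑_{n=1}^{∞} cos(nπx)/((nπ/a)² + 1) converges to cosh(a(1-x))/sinh(a). -/
open Real Complex

lemma aux_coeff (a : ℝ) (ha : 0 < a) (n : ℤ) (hab : (0:ℝ) < 0 + 2) :
    fourierCoeffOn hab (fun t => Complex.cosh (a*(1-t))) n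
      = ((a * Real.sinh a : ℝ) : ℂ) / ((a^2 + π^2 * (n:ℝ)^2 : ℝ) : ℂ) := by
  set c₁ : ℂ := -(a:ℂ) - π * n * Complex.I with hc₁def
  set c₂ : ℂ := (a:ℂ) - π * n * Complex.I with hc₂def
  have hc₁ : c₁ ≠ 0 := by
    intro h
    have := congrArg Complex.re h
    simp [hc₁def] at this
    linarith
  have hc₂ : c₂ ≠ 0 := by
    intro h
    have := congrArg Complex.re h
    simp [hc₂def] at this
    linarith
  clear_value c₁ c₂
  rw [fourierCoeffOn_eq_integral]
  have key : ∀ y : ℝ, (fourier (-n) (y : AddCircle (0+2-0:ℝ))) • Complex.cosh ((a:ℂ)*(1-y))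
      = Complex.exp a / 2 * Complex.exp (c₁ * y) + Complex.exp (-a) / 2 * Complex.exp (c₂ * y) := by
    intro y
    rw [fourier_coe_apply, smul_eq_mul]
    have h2 : (2:ℂ) * Complex.cosh ((a:ℂ)*(1-y)) = Complex.exp ((a:ℂ)*(1-y)) + Complex.exp (-((a:ℂ)*(1-y))) := Complex.two_cosh _
    have : Complex.cosh ((a:ℂ)*(1-y)) = (Complex.exp ((a:ℂ)*(1-y)) + Complex.exp (-((a:ℂ)*(1-y))))/2 := by
      rw [← h2]; ring
    rw [this]
    have expand : ∀ E B C : ℂ, Complex.exp E * ((Complex.exp B + Complex.exp C)/2)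
        = Complex.exp (E+B)/2 + Complex.exp (E+C)/2 := by
      intro E B C; rw [Complex.exp_add, Complex.exp_add]; ring
    rw [expand, div_mul_eq_mul_div, div_mul_eq_mul_div, ← Complex.exp_add, ← Complex.exp_add]
    congr 3 <;> (push_cast [hc₁def, hc₂def]; ring)
  simp_rw [key]
  have hi₁ : IntervalIntegrable (fun y:ℝ => Complex.exp a / 2 * Complex.exp (c₁ * y)) MeasureTheory.volume 0 (0+2) := by
    apply Continuous.intervalIntegrable; fun_prop
  have hi₂ : IntervalIntegrable (fun y:ℝ => Complex.exp (-a) / 2 * Complex.exp (c₂ * y)) MeasureTheory.volume 0 (0+2) := by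
    apply Continuous.intervalIntegrable; fun_prop
  rw [intervalIntegral.integral_add hi₁ hi₂, intervalIntegral.integral_const_mul,
    intervalIntegral.integral_const_mul, integral_exp_mul_complex hc₁, integral_exp_mul_complex hc₂]
  have e1 : Complex.exp (c₁ * (((0:ℝ)+2 : ℝ):ℂ)) = Complex.exp ((-2)*(a:ℂ)) := by
    rw [show c₁ * (((0:ℝ)+2 : ℝ):ℂ) = (-2)*(a:ℂ) + ((-n : ℤ) : ℂ) * (2*(π:ℝ)*Complex.I) by rw [hc₁def]; push_cast; ring,
      Complex.exp_add, Complex.exp_int_mul_two_pi_mul_I, mul_one]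
  have e2 : Complex.exp (c₂ * (((0:ℝ)+2 : ℝ):ℂ)) = Complex.exp (2*(a:ℂ)) := by
    rw [show c₂ * (((0:ℝ)+2 : ℝ):ℂ) = 2*(a:ℂ) + ((-n : ℤ) : ℂ) * (2*(π:ℝ)*Complex.I) by rw [hc₂def]; push_cast; ring,
      Complex.exp_add, Complex.exp_int_mul_two_pi_mul_I, mul_one]
  rw [e1, e2]
  norm_num
  have hden : ((a:ℂ)^2 + (π:ℂ)^2 * (n:ℂ)^2) = -(c₁ * c₂) := by
    rw [hc₁def, hc₂def]
    linear_combination ((π:ℂ)^2 * (n:ℂ)^2) * Complex.I_sq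
  have hsinh : Complex.sinh (a:ℂ) = (Complex.exp a - Complex.exp (-a)) / 2 := by
    have := Complex.two_sinh (a:ℂ); linear_combination this / 2
  have hE : Complex.exp (-(a:ℂ)) = (Complex.exp (a:ℂ))⁻¹ := Complex.exp_neg _
  have hEne : Complex.exp (a:ℂ) ≠ 0 := Complex.exp_ne_zero _
  have hdiff : c₂ - c₁ = 2*(a:ℂ) := by rw [hc₁def, hc₂def]; ring
  have hsinh : Complex.sinh (a:ℂ) = (Complex.exp a - Complex.exp (-a)) / 2 := by
    have := Complex.two_sinh (a:ℂ); linear_combination this / 2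
  have k1 : Complex.exp (a:ℂ) * (Complex.exp (-(2*(a:ℂ))) - 1) = Complex.exp (-(a:ℂ)) - Complex.exp (a:ℂ) := by
    rw [mul_sub, mul_one, ← Complex.exp_add, show ((a:ℂ) + -(2*(a:ℂ))) = -(a:ℂ) by ring]
  have k2 : Complex.exp (-(a:ℂ)) * (Complex.exp (2*(a:ℂ)) - 1) = Complex.exp (a:ℂ) - Complex.exp (-(a:ℂ)) := by
    rw [mul_sub, mul_one, ← Complex.exp_add, show (-(a:ℂ) + 2*(a:ℂ)) = (a:ℂ) by ring]
  have step : ∀ (u v X : ℂ), (1:ℂ)/2 * (u/2 * (X/v)) = u * X / (4*v) := by intros; ring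
  rw [step, step, k1, k2, hden, hsinh]
  field_simp [hc₁, hc₂]
  linear_combination (2*(Complex.exp (-(a:ℂ)) - Complex.exp (a:ℂ))) * hdiff


lemma aux_summable (a : ℝ) (ha : 0 < a) :
    Summable (fun i : ℤ => ((a * Real.sinh a : ℝ) : ℂ) / ((a^2 + π^2 * (i:ℝ)^2 : ℝ) : ℂ)) := by
  have hs : 0 ≤ a * Real.sinh a := le_of_lt (mul_pos ha (Real.sinh_pos_iff.mpr ha))
  apply Summable.of_norm_bounded_eventually
    (g := fun i : ℤ => (a * Real.sinh a / π^2) * (1 / (i:ℝ)^2))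
  · exact ((summable_one_div_int_pow (p := 2)).mpr one_lt_two).mul_left _
  · filter_upwards [Filter.eventually_cofinite_ne (0:ℤ)] with i hi
    have hi2 : (0:ℝ) < (i:ℝ)^2 := by positivity
    have hd : (0:ℝ) < a^2 + π^2*(i:ℝ)^2 := by positivity
    have : ((a * Real.sinh a : ℝ) : ℂ) / ((a^2 + π^2 * (i:ℝ)^2 : ℝ) : ℂ)
        = (((a * Real.sinh a) / (a^2 + π^2 * (i:ℝ)^2) : ℝ) : ℂ) := by push_cast; ring
    rw [this]
    rw [Complex.norm_real, Real.norm_eq_abs, _root_.abs_of_nonneg (div_nonneg hs hd.le)]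
    have hb : a * Real.sinh a / π^2 * (1/(i:ℝ)^2) = (a*Real.sinh a)/(π^2*(i:ℝ)^2) := by ring
    rw [hb]
    apply div_le_div_of_nonneg_left hs (by positivity)
    nlinarith [sq_nonneg a]

set_option maxHeartbeats 1600000 in
theorem stmt_11 (a : ℝ) (ha : 0 < a) (x : ℝ) (hx0 : 0 < x) (hx2 : x < 2) :
    HasSum (fun n : ℕ =>
        (2 / a) * Real.cos ((n + 1) * Real.pi * x) /
          (((n + 1) * Real.pi / a) ^ 2 + 1))
      (Real.cosh (a * (1 - x)) / Real.sinh a - 1 / a) := by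
  haveI : Fact (0 < (2:ℝ)) := ⟨two_pos⟩
  have hsp : 0 < Real.sinh a := Real.sinh_pos_iff.mpr ha
  have hsne : Real.sinh a ≠ 0 := ne_of_gt hsp
  set F : ℝ → ℂ := fun t : ℝ => Complex.cosh ((a:ℂ)*(1-(t:ℂ))) with hF
  have hFend : F 0 = F (0 + 2) := by
    simp only [hF]
    push_cast
    rw [show (a:ℂ)*(1-0) = (a:ℂ) by ring, show (a:ℂ)*(1-(0+2)) = -(a:ℂ) by ring, Complex.cosh_neg]
  have hFcont : ContinuousOn F (Set.Icc 0 (0+2)) := (Continuous.continuousOn (by fun_prop))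
  set g : C(AddCircle (2:ℝ), ℂ) := ⟨AddCircle.liftIco 2 0 F, AddCircle.liftIco_continuous hFend hFcont⟩ with hg
  have hcoeff : ∀ i : ℤ, fourierCoeff (⇑g) i
      = ((a * Real.sinh a : ℝ) : ℂ) / ((a^2 + π^2 * (i:ℝ)^2 : ℝ) : ℂ) := by
    intro i
    rw [hg]
    simp only [ContinuousMap.coe_mk]
    have h1 := fourierCoeff_liftIco_eq (T := (2:ℝ)) (a := 0) F i
    rw [h1]
    exact aux_coeff a ha i _
  have hsummable : Summable (fun i : ℤ => fourierCoeff (⇑g) i) :=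
    (aux_summable a ha).congr (fun i => (hcoeff i).symm)
  have hps := has_pointwise_sum_fourier_series_of_summable hsummable ((x : ℝ) : AddCircle (2:ℝ))
  have hgx : g ((x : ℝ) : AddCircle (2:ℝ)) = Complex.cosh ((a:ℂ)*(1-(x:ℂ))) := by
    rw [hg]
    simp only [ContinuousMap.coe_mk]
    rw [AddCircle.liftIco_coe_apply (by constructor <;> [linarith; skip] <;> simp <;> linarith)]
  simp only [hcoeff, smul_eq_mul, hgx] at hps
  have hps2 := hps.div_const ((Real.sinh a : ℝ) : ℂ)
  set c : ℤ → ℂ := fun i =>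
      ((a * Real.sinh a : ℝ) : ℂ) / ((a^2 + π^2 * (i:ℝ)^2 : ℝ) : ℂ)
        * fourier i ((x:ℝ) : AddCircle (2:ℝ)) / ((Real.sinh a : ℝ) : ℂ) with hc
  have h3 := hps2.nat_add_neg
  have hc0 : c 0 = 1/(a:ℂ) := by
    simp only [hc]
    norm_num [fourier_zero]
    have ha' : (a:ℂ) ≠ 0 := Complex.ofReal_ne_zero.mpr (ne_of_gt ha)
    have hs' : Complex.sinh (a:ℂ) ≠ 0 := by
      rw [← Complex.ofReal_sinh]; exact Complex.ofReal_ne_zero.mpr hsne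
    field_simp
  have h4 : HasSum (fun n : ℕ => c ((n+1 : ℕ)) + c (-((n+1 : ℕ) : ℤ)))
      (Complex.cosh ((a:ℂ)*(1-(x:ℂ)))/((Real.sinh a : ℝ) : ℂ) - 1/(a:ℂ)) := by
    refine (hasSum_nat_add_iff (f := fun n : ℕ => c n + c (-(n:ℤ))) 1).mpr ?_
    convert h3 using 1
    · rfl
    simp [hc0]
  have hterm : ∀ n : ℕ, c ((n+1 : ℕ)) + c (-((n+1 : ℕ) : ℤ))
      = (((2 / a) * Real.cos ((n + 1) * π * x) / (((n + 1) * π / a) ^ 2 + 1) : ℝ) : ℂ) := by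
    intro n
    simp only [hc]
    rw [fourier_coe_apply, fourier_coe_apply]
    rw [show 2*(π:ℂ)*Complex.I*(((n+1:ℕ):ℤ):ℂ)*(x:ℂ)/((2:ℝ):ℂ)
        = ((((n:ℝ)+1)*π*x : ℝ) : ℂ) * Complex.I by push_cast; ring]
    rw [show 2*(π:ℂ)*Complex.I*(Int.cast (-((n+1:ℕ):ℤ)) : ℂ)*(x:ℂ)/((2:ℝ):ℂ)
        = -((((n:ℝ)+1)*π*x : ℝ) : ℂ) * Complex.I by push_cast; ring]
    rw [show ((Int.cast (-((n+1:ℕ):ℤ)) : ℝ))^2 = ((((n+1:ℕ):ℤ):ℝ))^2 by push_cast; ring]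
    rw [show (a^2 + π^2*((((n+1:ℕ):ℤ):ℝ))^2 : ℝ) = (a^2 + π^2*((n:ℝ)+1)^2 : ℝ) by push_cast; ring]
    set A : ℂ := ((a * Real.sinh a : ℝ) : ℂ) / ((a^2 + π^2*((n:ℝ)+1)^2 : ℝ) : ℂ)
    set u : ℝ := ((n:ℝ)+1)*π*x with hu
    rw [show A * Complex.exp ((u:ℂ)*Complex.I) / ((Real.sinh a : ℝ):ℂ)
          + A * Complex.exp (-(u:ℂ)*Complex.I) / ((Real.sinh a : ℝ):ℂ)
        = A * (Complex.exp ((u:ℂ)*Complex.I) + Complex.exp (-(u:ℂ)*Complex.I)) / ((Real.sinh a : ℝ):ℂ) by ring]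
    rw [show Complex.exp ((u:ℂ)*Complex.I) + Complex.exp (-(u:ℂ)*Complex.I)
        = 2 * Complex.cos (u:ℂ) from (Complex.two_cos _).symm, ← Complex.ofReal_cos]
    simp only [A]
    have hd : (0:ℝ) < a^2 + π^2*((n:ℝ)+1)^2 := by positivity
    have hd2 : (((n:ℝ)+1)*π/a)^2 + 1 ≠ 0 := by positivity
    norm_cast
    field_simp
    ring_nf
    push_cast
    ring
  have hval : Complex.cosh ((a:ℂ)*(1-(x:ℂ)))/((Real.sinh a : ℝ) : ℂ) - 1/(a:ℂ)
      = ((Real.cosh (a*(1-x))/Real.sinh a - 1/a : ℝ) : ℂ) := by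
    push_cast [Complex.ofReal_cosh]
    ring
  rw [hval, funext hterm] at h4
  exact Complex.hasSum_ofReal.mp h4
end
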